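/- arXiv:1103.1850 — 2 statements merged into one kernel-verified Lean document; each statement's English description precedes it below -/
import Mathlib

section
/- Let T be a Lorenz-like cusp map satisfying conditions (i)–(iii) of the expansion lemma. Then the tail of the Lebesgue measure of the return-time function on the induced set I decays exponentially: Σ_{k>n} m{x ∈ I : τ_I(x) ≥ k} = O((α')^{−n/B*}) as n → ∞. -/
open Set Filter MeasureTheory Topology Asymptotics

noncomputable section

/-- A Lorenz-like cusp map of the unit interval, as in Gianfelice–Maimone–Pelino–Vaienti:
cusp point `x₀ ∈ (0,1)`, increasing convex left branch onto `[0,1]`, decreasing convex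
right branch onto `[0,1]`, `C¹` away from the cusp, `C^{1+ι}` derivative on each side,
with the prescribed local behaviours at `0`, `1` and at the cusp. -/
structure LorenzMap where
  T : ℝ → ℝ
  DT : ℝ → ℝ
  x₀ : ℝ
  ι : ℝ
  α' : ℝ
  α : ℝ
  ψ : ℝ
  κ : ℝ
  A : ℝ
  A' : ℝ
  B : ℝ
  B' : ℝ
  β' : ℝ
  βt : ℝ
  hx₀ : x₀ ∈ Ioo (0:ℝ) 1
  hι : ι ∈ Ioo (0:ℝ) 1
  hα' : 1 < α'
  hα : α ∈ Ioo (0:ℝ) 1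
  hψ : 1 < ψ
  hκ : 1 < κ
  hA : 0 < A
  hA' : 0 < A'
  hB : B ∈ Ioo (0:ℝ) 1
  hB' : B' ∈ Ioo (0:ℝ) 1
  hβ' : 0 < β'
  hβt : 0 < βt
  measurable_T : Measurable T
  mapsTo : MapsTo T (Icc 0 1) (Icc 0 1)
  left_mono : StrictMonoOn T (Icc 0 x₀)
  right_anti : StrictAntiOn T (Icc x₀ 1)
  left_convex : ConvexOn ℝ (Icc 0 x₀) T
  right_convex : ConvexOn ℝ (Icc x₀ 1) T
  left_onto : SurjOn T (Icc 0 x₀) (Icc 0 1)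
  right_onto : SurjOn T (Icc x₀ 1) (Icc 0 1)
  hasDeriv : ∀ x ∈ Icc (0:ℝ) 1, x ≠ x₀ → HasDerivAt T (DT x) x
  holder : ∃ Ch > (0:ℝ),
    (∀ x ∈ Ioo 0 x₀, ∀ y ∈ Ioo 0 x₀, |DT x - DT y| ≤ Ch * |x - y| ^ ι) ∧
    (∀ x ∈ Ioo x₀ 1, ∀ y ∈ Ioo x₀ 1, |DT x - DT y| ≤ Ch * |x - y| ^ ι)
  T_asym0 : (fun x : ℝ => T x - (α' * x + β' * x ^ (1+ψ))) =o[𝓝[>] 0] fun x : ℝ => x ^ (1+ψ)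
  DT_asym0 : ∃ c > (0:ℝ), (fun x : ℝ => DT x - (α' + c * x ^ ψ)) =o[𝓝[>] 0] fun x : ℝ => x ^ ψ
  T_asym1 : (fun x : ℝ => T x - (α * (1-x) + βt * (1-x) ^ (1+κ))) =o[𝓝[<] 1]
    fun x : ℝ => (1-x) ^ (1+κ)
  DT_asym1 : ∃ c > (0:ℝ), (fun x : ℝ => DT x - (-α - c * (1-x) ^ κ)) =o[𝓝[<] 1]
    fun x : ℝ => (1-x) ^ κ
  T_asymL : (fun x : ℝ => T x - (1 - A' * (x₀ - x) ^ B')) =o[𝓝[<] x₀]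
    fun x : ℝ => (x₀ - x) ^ B'
  DT_asymL : ∃ c > (0:ℝ), (fun x : ℝ => DT x - c * (x₀ - x) ^ (B'-1)) =o[𝓝[<] x₀]
    fun x : ℝ => (x₀ - x) ^ (B'-1)
  T_asymR : (fun x : ℝ => T x - (1 - A * (x - x₀) ^ B)) =o[𝓝[>] x₀]
    fun x : ℝ => (x - x₀) ^ B
  DT_asymR : ∃ c > (0:ℝ), (fun x : ℝ => DT x - (-(c * (x - x₀) ^ (B-1)))) =o[𝓝[>] x₀]
    fun x : ℝ => (x - x₀) ^ (B-1)

/-- `B* = max (B, B')`. -/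
def LorenzMap.Bs (L : LorenzMap) : ℝ := max L.B L.B'

/-- The preimages of the cusp point: `a 0 = a₀ = T₂⁻¹ x₀`, `a' 0 = a₀' = T₁⁻¹ x₀`,
`a' p = T₁⁻ᵖ a₀'`, `a p = T₂⁻¹ T₁^{-(p-1)} a₀'` and the points `b p ∈ (x₀, a₀)`,
`b' p ∈ (a₀', x₀)` (for `p ≥ 1`) with `T (b p) = T (b' p) = a (p-1)`. -/
structure PreimageData (L : LorenzMap) where
  a : ℕ → ℝ
  a' : ℕ → ℝ
  b : ℕ → ℝ
  b' : ℕ → ℝ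
  ha0 : a 0 ∈ Ioo L.x₀ 1 ∧ L.T (a 0) = L.x₀
  ha'0 : a' 0 ∈ Ioo 0 L.x₀ ∧ L.T (a' 0) = L.x₀
  ha' : ∀ p : ℕ, a' (p+1) ∈ Ioo (0:ℝ) L.x₀ ∧ L.T (a' (p+1)) = a' p
  ha : ∀ p : ℕ, a (p+1) ∈ Ioo L.x₀ 1 ∧ L.T (a (p+1)) = a' p
  hb : ∀ p : ℕ, b (p+1) ∈ Ioo L.x₀ (a 0) ∧ L.T (b (p+1)) = a p
  hb' : ∀ p : ℕ, b' (p+1) ∈ Ioo (a' 0) L.x₀ ∧ L.T (b' (p+1)) = a p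

/-- `d_{(1,0)} := inf_{x ∈ (b₁, a₀)} |DT x|`. -/
def dOneZero (L : LorenzMap) (P : PreimageData L) : ℝ :=
  sInf ((fun x => |L.DT x|) '' Ioo (P.b 1) (P.a 0))

/-- `p* := ⌊1 + log (α'' α⁻¹) / log α'⌋`. -/
def pstar (L : LorenzMap) (α'' : ℝ) : ℤ :=
  ⌊1 + Real.log (α'' / L.α) / Real.log L.α'⌋

/-- Conditions (i)–(iii) of the expansion lemma, for a constant
`α''` with `1 < α'' ≤ min (d_{(1,0)}, α')`. -/
def ExpCond (L : LorenzMap) (P : PreimageData L) (α'' : ℝ) : Prop :=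
  1 < α'' ∧ α'' ≤ min (dOneZero L P) L.α' ∧
  1 < dOneZero L P ∧
  L.DT (P.a' 0) ≤ |L.DT (P.b 1)| ∧
  ∀ p : ℕ, 1 ≤ p → (p : ℤ) ≤ pstar L α'' →
    α'' < |L.DT (P.a (p-1))| * ∏ k ∈ Finset.range (p-1), L.DT (P.a' k)

/-- The induction set `I = (a₀', a₀) \ {x₀}`. -/
def indSet (L : LorenzMap) (P : PreimageData L) : Set ℝ :=
  Ioo (P.a' 0) (P.a 0) \ {L.x₀}

/-- The cylinders of first return time `p`:
`Z₁ = (a₀',b₁') ∪ (b₁,a₀)` and `Z_p = (b'_{p-1},b'_p) ∪ (b_p,b_{p-1})` for `p > 1`. -/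
def Zcyl (L : LorenzMap) (P : PreimageData L) : ℕ → Set ℝ
  | 0 => ∅
  | 1 => Ioo (P.a' 0) (P.b' 1) ∪ Ioo (P.b 1) (P.a 0)
  | p + 2 => Ioo (P.b' (p+1)) (P.b' (p+2)) ∪ Ioo (P.b (p+2)) (P.b (p+1))

/-- First return time of `x` to the set `I` under `T` (`0` if the point never returns). -/
def firstReturn (T : ℝ → ℝ) (I : Set ℝ) (x : ℝ) : ℕ :=
  sInf {n : ℕ | 1 ≤ n ∧ T^[n] x ∈ I}

/-- The first return map to `I`. -/
def returnMap (T : ℝ → ℝ) (I : Set ℝ) (x : ℝ) : ℝ :=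
  T^[firstReturn T I x] x

/-- `μ` is an absolutely continuous (w.r.t. Lebesgue) `T`-invariant Borel probability
measure concentrated on `[0,1]`. -/
def acim (T : ℝ → ℝ) (μ : Measure ℝ) : Prop :=
  IsProbabilityMeasure μ ∧ μ ≪ volume ∧ μ (Icc 0 1) = 1 ∧ Measure.map T μ = μ

/-- A Hölder continuous observable on `[0,1]`. -/
def HolderObs (f : ℝ → ℝ) : Prop :=
  ∃ C γ : NNReal, 0 < γ ∧ HolderOnWith C γ f (Icc (0:ℝ) 1)

/-- `μI` is the invariant probability measure of the first return map on `I`, absolutely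
continuous with density bounded away from `0` and `∞`. -/
def inducedInv (L : LorenzMap) (P : PreimageData L) (μI : Measure ℝ) : Prop :=
  IsProbabilityMeasure μI ∧ μI (indSet L P) = 1 ∧
  Measure.map (returnMap L.T (indSet L P)) μI = μI ∧
  ∃ ρI : ℝ → ℝ, ∃ c C : ℝ, 0 < c ∧
    μI = (volume.restrict (indSet L P)).withDensity (fun x => ENNReal.ofReal (ρI x)) ∧
    ∀ x ∈ indSet L P, c ≤ ρI x ∧ ρI x ≤ C

/-! ### Auxiliary lemmas for the proof of Statement 2 -/

section Aux

variable (L : LorenzMap)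

lemma LM_T0 : L.T 0 = 0 := by
  obtain ⟨t, ht, hTt⟩ := L.left_onto (show (0:ℝ) ∈ Icc 0 1 by constructor <;> norm_num)
  rcases eq_or_lt_of_le ht.1 with h | h
  · exact h ▸ hTt
  · have h2 : L.T 0 < L.T t := L.left_mono ⟨le_rfl, L.hx₀.1.le⟩ ht h
    have h3 := (L.mapsTo (show (0:ℝ) ∈ Icc 0 1 by constructor <;> norm_num)).1
    rw [hTt] at h2; linarith

lemma LM_T1 : L.T 1 = 0 := by
  obtain ⟨t, ht, hTt⟩ := L.right_onto (show (0:ℝ) ∈ Icc 0 1 by constructor <;> norm_num)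
  rcases eq_or_lt_of_le ht.2 with h | h
  · exact h ▸ hTt
  · have h2 : L.T 1 < L.T t := L.right_anti ht ⟨L.hx₀.2.le, le_rfl⟩ h
    have h3 := (L.mapsTo (show (1:ℝ) ∈ Icc 0 1 by constructor <;> norm_num)).1
    rw [hTt] at h2; linarith

lemma LM_Tx0 : L.T L.x₀ = 1 := by
  obtain ⟨t, ht, hTt⟩ := L.left_onto (show (1:ℝ) ∈ Icc 0 1 by constructor <;> norm_num)
  rcases eq_or_lt_of_le ht.2 with h | h
  · rw [← h]; exact hTt
  · have h2 : L.T t < L.T L.x₀ := L.left_mono ht ⟨L.hx₀.1.le, le_rfl⟩ h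
    have h3 := (L.mapsTo (show L.x₀ ∈ Icc 0 1 from ⟨L.hx₀.1.le, L.hx₀.2.le⟩)).2
    rw [hTt] at h2; linarith

/-- Convexity and the asymptotics at `0` give `α' t ≤ T t` on `(0, x₀]`. -/
lemma LM_slope_left : ∀ t : ℝ, 0 < t → t ≤ L.x₀ → L.α' * t ≤ L.T t := by
  have hT0 := LM_T0 L
  have hev := isLittleO_iff.mp L.T_asym0 L.hβ'
  obtain ⟨δ, hδ, hsub⟩ := mem_nhdsGT_iff_exists_Ioo_subset.mp hev
  rw [mem_Ioi] at hδ
  intro t ht htx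
  set s := min (δ/2) t with hs
  have hs0 : 0 < s := lt_min (by linarith) ht
  have hsδ : s < δ := (min_le_left _ _).trans_lt (by linarith)
  have hst : s ≤ t := min_le_right _ _
  have h1 := hsub ⟨hs0, hsδ⟩
  simp only [Set.mem_setOf_eq, Real.norm_eq_abs] at h1
  have hsp : 0 ≤ s ^ (1+L.ψ) := Real.rpow_nonneg hs0.le _
  rw [abs_of_nonneg hsp] at h1
  have h2 : L.α' * s ≤ L.T s := by
    have h3 := (abs_le.mp h1).1
    nlinarith [L.hβ'.le]
  have hsec := L.left_convex.secant_mono (a := 0) (x := s) (y := t)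
    ⟨le_rfl, L.hx₀.1.le⟩ ⟨hs0.le, hst.trans htx⟩ ⟨ht.le, htx⟩ (ne_of_gt hs0) (ne_of_gt ht) hst
  rw [hT0] at hsec
  simp only [sub_zero] at hsec
  have h3 : L.α' ≤ L.T s / s := (le_div_iff₀ hs0).mpr h2
  exact (le_div_iff₀ ht).mp (h3.trans hsec)

/-- Convexity and the asymptotics at `1` give `α (1-t) ≤ T t` on `[x₀, 1)`. -/
lemma LM_slope_right : ∀ t : ℝ, L.x₀ ≤ t → t < 1 → L.α * (1 - t) ≤ L.T t := by
  have hT1 := LM_T1 L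
  have hev := isLittleO_iff.mp L.T_asym1 L.hβt
  obtain ⟨c, hc, hsub⟩ := mem_nhdsLT_iff_exists_Ioo_subset.mp hev
  rw [mem_Iio] at hc
  intro t hxt ht1
  set s := (max t c + 1)/2 with hsdef
  have hmax1 : max t c < 1 := max_lt ht1 hc
  have hts : t < s := lt_of_le_of_lt (le_max_left t c) (by unfold s; linarith)
  have hcs : c < s := lt_of_le_of_lt (le_max_right t c) (by unfold s; linarith)
  have hs1 : s < 1 := by unfold s; linarith
  have h1 := hsub ⟨hcs, hs1⟩
  simp only [Set.mem_setOf_eq, Real.norm_eq_abs] at h1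
  have hsp : 0 ≤ (1-s) ^ (1+L.κ) := Real.rpow_nonneg (by linarith) _
  rw [abs_of_nonneg hsp] at h1
  have h2 : L.α * (1 - s) ≤ L.T s := by
    have h3 := (abs_le.mp h1).1
    nlinarith [L.hβt.le]
  have hsec := L.right_convex.secant_mono (a := 1) (x := t) (y := s)
    ⟨L.hx₀.2.le, le_rfl⟩ ⟨hxt, ht1.le⟩ ⟨by linarith, hs1.le⟩ (ne_of_lt ht1) (ne_of_lt hs1) hts.le
  rw [hT1] at hsec
  simp only [sub_zero] at hsec
  have e : ∀ u v : ℝ, u / (v - 1) = -(u / (1 - v)) := by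
    intro u v; rw [show v - 1 = -(1 - v) by ring, div_neg]
  rw [e, e] at hsec
  have hsec' : L.T s / (1 - s) ≤ L.T t / (1 - t) := by linarith
  have h3 : L.α ≤ L.T s / (1 - s) := (le_div_iff₀ (by linarith)).mpr (by linarith)
  have h4 : L.α ≤ L.T t / (1 - t) := h3.trans hsec'
  have := (le_div_iff₀ (by linarith : (0:ℝ) < 1 - t)).mp h4
  linarith

variable (P : PreimageData L)

/-- Quantitative upper bound for `T` on the right of the cusp. -/
lemma LM_cusp_right : ∃ c > (0:ℝ), ∀ x : ℝ, L.x₀ < x → x ≤ P.a 0 →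
    L.T x ≤ 1 - c * (x - L.x₀) ^ L.B := by
  have hev := isLittleO_iff.mp L.T_asymR (half_pos L.hA)
  obtain ⟨δ, hδ, hsub⟩ := mem_nhdsGT_iff_exists_Ioo_subset.mp hev
  rw [mem_Ioi] at hδ
  obtain ⟨⟨hx0a, ha01⟩, _⟩ := P.ha0
  have hx0pos := L.hx₀.1
  set u := min ((L.x₀ + δ)/2) ((L.x₀ + P.a 0)/2) with hu
  have hu1 : L.x₀ < u := lt_min (by linarith) (by linarith)
  have hu2 : u < δ := (min_le_left _ _).trans_lt (by linarith)
  have hu3 : u < P.a 0 := (min_le_right _ _).trans_lt (by linarith)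
  have hbound : ∀ y : ℝ, L.x₀ < y → y < δ → L.T y ≤ 1 - L.A/2 * (y - L.x₀) ^ L.B := by
    intro y h1 h2
    have h3 := hsub ⟨h1, h2⟩
    simp only [Set.mem_setOf_eq, Real.norm_eq_abs] at h3
    have hge : 0 ≤ (y - L.x₀) ^ L.B := Real.rpow_nonneg (by linarith) _
    rw [abs_of_nonneg hge] at h3
    have h4 := (abs_le.mp h3).2
    nlinarith
  set η := L.A/2 * (u - L.x₀) ^ L.B with hη
  have hηpos : 0 < η := mul_pos (half_pos L.hA) (Real.rpow_pos_of_pos (by linarith) _)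
  have hη1 : η ≤ L.A/2 := by
    have h5 : (u - L.x₀) ^ L.B ≤ 1 :=
      Real.rpow_le_one (by linarith) (by linarith) L.hB.1.le
    nlinarith [L.hA]
  refine ⟨η, hηpos, fun x hx1 hx2 => ?_⟩
  have hzB0 : 0 ≤ (x - L.x₀) ^ L.B := Real.rpow_nonneg (by linarith) _
  rcases lt_or_ge x u with h | h
  · have h6 := hbound x hx1 (h.trans hu2)
    have h7 : η * (x - L.x₀) ^ L.B ≤ L.A/2 * (x - L.x₀) ^ L.B :=
      mul_le_mul_of_nonneg_right hη1 hzB0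
    linarith
  · have hTu := hbound u hu1 hu2
    have hTx : L.T x ≤ L.T u := L.right_anti.antitoneOn
      ⟨hu1.le, by linarith⟩ ⟨by linarith, by linarith⟩ h
    have hzB1 : (x - L.x₀) ^ L.B ≤ 1 :=
      Real.rpow_le_one (by linarith) (by linarith) L.hB.1.le
    have h8 : η * (x - L.x₀) ^ L.B ≤ η := by nlinarith
    linarith

/-- Quantitative upper bound for `T` on the left of the cusp. -/
lemma LM_cusp_left : ∃ c > (0:ℝ), ∀ x : ℝ, P.a' 0 ≤ x → x < L.x₀ →
    L.T x ≤ 1 - c * (L.x₀ - x) ^ L.B' := by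
  have hev := isLittleO_iff.mp L.T_asymL (half_pos L.hA')
  obtain ⟨δ, hδ, hsub⟩ := mem_nhdsLT_iff_exists_Ioo_subset.mp hev
  rw [mem_Iio] at hδ
  obtain ⟨⟨ha'pos, ha'x0⟩, _⟩ := P.ha'0
  have hx01 := L.hx₀.2
  set u := max ((L.x₀ + δ)/2) ((L.x₀ + P.a' 0)/2) with hu
  have hu1 : u < L.x₀ := max_lt (by linarith) (by linarith)
  have hu2 : δ < u := lt_of_lt_of_le (by linarith) (le_max_left _ _)
  have hu3 : P.a' 0 < u := lt_of_lt_of_le (by linarith) (le_max_right _ _)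
  have hbound : ∀ y : ℝ, δ < y → y < L.x₀ → L.T y ≤ 1 - L.A'/2 * (L.x₀ - y) ^ L.B' := by
    intro y h1 h2
    have h3 := hsub ⟨h1, h2⟩
    simp only [Set.mem_setOf_eq, Real.norm_eq_abs] at h3
    have hge : 0 ≤ (L.x₀ - y) ^ L.B' := Real.rpow_nonneg (by linarith) _
    rw [abs_of_nonneg hge] at h3
    have h4 := (abs_le.mp h3).2
    nlinarith
  set η := L.A'/2 * (L.x₀ - u) ^ L.B' with hη
  have hηpos : 0 < η := mul_pos (half_pos L.hA') (Real.rpow_pos_of_pos (by linarith) _)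
  have hη1 : η ≤ L.A'/2 := by
    have h5 : (L.x₀ - u) ^ L.B' ≤ 1 :=
      Real.rpow_le_one (by linarith) (by linarith) L.hB'.1.le
    nlinarith [L.hA']
  refine ⟨η, hηpos, fun x hx1 hx2 => ?_⟩
  have hzB0 : 0 ≤ (L.x₀ - x) ^ L.B' := Real.rpow_nonneg (by linarith) _
  rcases lt_or_ge u x with h | h
  · have h6 := hbound x (hu2.trans h) hx2
    have h7 : η * (L.x₀ - x) ^ L.B' ≤ L.A'/2 * (L.x₀ - x) ^ L.B' :=
      mul_le_mul_of_nonneg_right hη1 hzB0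
    linarith
  · have hTu := hbound u hu2 hu1
    have hTx : L.T x ≤ L.T u := L.left_mono.monotoneOn
      ⟨by linarith, by linarith⟩ ⟨by linarith, hu1.le⟩ h
    have hzB1 : (L.x₀ - x) ^ L.B' ≤ 1 :=
      Real.rpow_le_one (by linarith) (by linarith) L.hB'.1.le
    have h8 : η * (L.x₀ - x) ^ L.B' ≤ η := by nlinarith
    linarith

/-- Preimages of finite sets (within `[0,1]`) are finite. -/
lemma LM_preim_finite (s : Set ℝ) (hs : s.Finite) :
    {x : ℝ | x ∈ Icc (0:ℝ) 1 ∧ L.T x ∈ s}.Finite := by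
  have hsub : {x : ℝ | x ∈ Icc (0:ℝ) 1 ∧ L.T x ∈ s} ⊆
      ⋃ y ∈ s, ({x : ℝ | x ∈ Icc 0 L.x₀ ∧ L.T x = y} ∪ {x : ℝ | x ∈ Icc L.x₀ 1 ∧ L.T x = y}) := by
    rintro x ⟨hx, hTx⟩
    refine Set.mem_biUnion hTx ?_
    rcases le_or_gt x L.x₀ with h | h
    · exact Or.inl ⟨⟨hx.1, h⟩, rfl⟩
    · exact Or.inr ⟨⟨h.le, hx.2⟩, rfl⟩
  refine Set.Finite.subset (Set.Finite.biUnion hs fun y _ => ?_) hsub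
  refine Set.Finite.union ?_ ?_
  · refine Set.Subsingleton.finite ?_
    rintro x1 ⟨hm1, he1⟩ x2 ⟨hm2, he2⟩
    exact L.left_mono.injOn hm1 hm2 (by rw [he1, he2])
  · refine Set.Subsingleton.finite ?_
    rintro x1 ⟨hm1, he1⟩ x2 ⟨hm2, he2⟩
    exact L.right_anti.injOn hm1 hm2 (by rw [he1, he2])

lemma LM_iter_preim_finite (k : ℕ) :
    {x : ℝ | x ∈ Icc (0:ℝ) 1 ∧ L.T^[k] x = L.x₀}.Finite := by
  induction k with
  | zero =>
    refine Set.Finite.subset (Set.finite_singleton L.x₀) ?_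
    rintro x ⟨_, hx⟩
    simpa using hx
  | succ k ih =>
    have hsub : {x : ℝ | x ∈ Icc (0:ℝ) 1 ∧ L.T^[k+1] x = L.x₀} ⊆
        {x : ℝ | x ∈ Icc (0:ℝ) 1 ∧ L.T x ∈ {y : ℝ | y ∈ Icc (0:ℝ) 1 ∧ L.T^[k] y = L.x₀}} := by
      rintro x ⟨hx, hit⟩
      exact ⟨hx, L.mapsTo hx, by rwa [← Function.iterate_succ_apply]⟩
    exact Set.Finite.subset (LM_preim_finite L _ ih) hsub

/-- Pure `rpow` computation used to extract the decay rate. -/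
lemma rpow_extract {a M b Bx Bs z q : ℝ} (ha : 1 < a) (hM : 1 ≤ M) (hb : 0 < b)
    (hbBx : b ≤ Bx) (hBxBs : Bx ≤ Bs) (hz0 : 0 ≤ z) (hq : 0 ≤ q)
    (h : z ^ Bx ≤ M * a ^ (-q)) : z ≤ M ^ (1/b) * a ^ (-q / Bs) := by
  have hBx : 0 < Bx := lt_of_lt_of_le hb hbBx
  have hBs : 0 < Bs := lt_of_lt_of_le hBx hBxBs
  have ha0 : (0:ℝ) < a := zero_lt_one.trans ha
  have hBx1 : Bx * (1/Bx) = 1 := by field_simp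
  have h1 : (z ^ Bx) ^ (1/Bx) = z := by
    rw [← Real.rpow_mul hz0, hBx1, Real.rpow_one]
  have e1 : M ^ (1/Bx) ≤ M ^ (1/b) :=
    Real.rpow_le_rpow_of_exponent_le hM (one_div_le_one_div_of_le hb hbBx)
  have e2 : (a ^ (-q)) ^ (1/Bx) = a ^ (-q * (1/Bx)) := (Real.rpow_mul ha0.le _ _).symm
  have e3 : a ^ (-q * (1/Bx)) ≤ a ^ (-q / Bs) := by
    refine Real.rpow_le_rpow_of_exponent_le ha.le ?_
    have h4 : q * (1/Bs) ≤ q * (1/Bx) :=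
      mul_le_mul_of_nonneg_left (one_div_le_one_div_of_le hBx hBxBs) hq
    have h5 : -q / Bs = -(q * (1/Bs)) := by ring
    have h6 : -q * (1/Bx) = -(q * (1/Bx)) := by ring
    rw [h5, h6]; linarith
  calc z = (z ^ Bx) ^ (1/Bx) := h1.symm
    _ ≤ (M * a ^ (-q)) ^ (1/Bx) :=
        Real.rpow_le_rpow (Real.rpow_nonneg hz0 _) h (by positivity)
    _ = M ^ (1/Bx) * (a ^ (-q)) ^ (1/Bx) :=
        Real.mul_rpow (by linarith) (Real.rpow_nonneg ha0.le _)
    _ ≤ M ^ (1/b) * a ^ (-q / Bs) := by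
        refine mul_le_mul e1 ?_ (Real.rpow_nonneg (Real.rpow_nonneg ha0.le _) _)
          (Real.rpow_nonneg (by linarith) _)
        rw [e2]; exact e3

/-- The pointwise estimate: a point of `I` which does not return to `I` before time `N`
(and whose orbit avoids the cusp) must be within `K (α')^{-N/B*}` of the cusp. -/
lemma key_pointwise : ∃ K > (0:ℝ), ∀ N : ℕ, 3 ≤ N → ∀ x ∈ indSet L P,
    (∀ k : ℕ, 1 ≤ k → k < N → L.T^[k] x ∉ indSet L P) →
    (∀ k : ℕ, 2 ≤ k → k < N → L.T^[k] x ≠ L.x₀) →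
    |x - L.x₀| ≤ K * L.α' ^ (-(N:ℝ) / L.Bs) := by
  obtain ⟨cR, hcR, hR⟩ := LM_cusp_right L P
  obtain ⟨cL, hcL, hL⟩ := LM_cusp_left L P
  obtain ⟨⟨hx0a0, ha01⟩, hTa0⟩ := P.ha0
  obtain ⟨⟨ha'0pos, ha'0x0⟩, hTa'0⟩ := P.ha'0
  have hx0pos := L.hx₀.1
  have hx01 := L.hx₀.2
  have hα'1 := L.hα'
  have hα'0 : (0:ℝ) < L.α' := zero_lt_one.trans hα'1
  have hαpos := L.hα.1
  have hT0 := LM_T0 L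
  have hT1 := LM_T1 L
  have hTx0 := LM_Tx0 L
  set b := min L.B L.B' with hbdef
  have hbpos : 0 < b := lt_min L.hB.1 L.hB'.1
  set M := max 1 (max (P.a' 0/(L.α * cR)) (P.a' 0/(L.α * cL))) with hMdef
  have hM1 : (1:ℝ) ≤ M := le_max_left _ _
  have hBs_pos : 0 < L.Bs := lt_of_lt_of_le L.hB.1 (le_max_left _ _)
  have hBBs : L.B ≤ L.Bs := le_max_left _ _
  have hB'Bs : L.B' ≤ L.Bs := le_max_right _ _
  refine ⟨M ^ (1/b) * L.α' ^ ((3:ℝ)/L.Bs), by positivity, fun N hN x hxI hret hnc => ?_⟩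
  obtain ⟨hxIoo, hxne⟩ := hxI
  have hxne' : x ≠ L.x₀ := by simpa using hxne
  -- Step A : T x ∈ (x₀, 1)
  have hy1 : L.T x ∈ Ioo L.x₀ 1 := by
    rcases hxne'.lt_or_gt with h | h
    · constructor
      · have h2 : L.T (P.a' 0) < L.T x :=
          L.left_mono ⟨ha'0pos.le, ha'0x0.le⟩ ⟨by linarith [hxIoo.1], h.le⟩ hxIoo.1
        rwa [hTa'0] at h2
      · have h2 : L.T x < L.T L.x₀ :=
          L.left_mono ⟨by linarith [hxIoo.1], h.le⟩ ⟨hx0pos.le, le_rfl⟩ h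
        rwa [hTx0] at h2
    · constructor
      · have h2 : L.T (P.a 0) < L.T x :=
          L.right_anti ⟨h.le, by linarith [hxIoo.2]⟩ ⟨hx0a0.le, ha01.le⟩ hxIoo.2
        rwa [hTa0] at h2
      · have h2 : L.T x < L.T L.x₀ :=
          L.right_anti ⟨le_rfl, hx01.le⟩ ⟨h.le, by linarith [hxIoo.2]⟩ h
        rwa [hTx0] at h2
  -- Step B : a₀ ≤ T x
  have hy1ge : P.a 0 ≤ L.T x := by
    by_contra hcon
    push_neg at hcon
    refine hret 1 le_rfl (by omega) ?_
    rw [Function.iterate_one]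
    exact ⟨⟨by linarith [hy1.1], hcon⟩, by simpa using (ne_of_gt hy1.1)⟩
  -- Step C : T² x ∈ (0, a₀']
  have e2 : L.T^[2] x = L.T (L.T x) := by
    rw [show (2:ℕ) = 1 + 1 from rfl, Function.iterate_succ_apply', Function.iterate_one]
  have h2N : 2 < N := by omega
  have hy2pos : 0 < L.T (L.T x) := by
    have h2 : L.T 1 < L.T (L.T x) := L.right_anti ⟨hy1.1.le, hy1.2.le⟩ ⟨by linarith, le_rfl⟩ hy1.2
    rwa [hT1] at h2
  have hy2le : L.T (L.T x) ≤ L.x₀ := by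
    have h2 : L.T (L.T x) ≤ L.T (P.a 0) :=
      L.right_anti.antitoneOn ⟨hx0a0.le, ha01.le⟩ ⟨hy1.1.le, hy1.2.le⟩ hy1ge
    rwa [hTa0] at h2
  have hy2ne : L.T (L.T x) ≠ L.x₀ := by
    have := hnc 2 le_rfl h2N; rwa [e2] at this
  have hy2nI : L.T (L.T x) ∉ indSet L P := by
    have := hret 2 (by omega) h2N; rwa [e2] at this
  have hy2a'0 : L.T (L.T x) ≤ P.a' 0 := by
    by_contra hcon
    push_neg at hcon
    exact hy2nI ⟨⟨hcon, by linarith⟩, by simpa using hy2ne⟩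
  -- Step D : the orbit stays in (0, a₀'] and grows geometrically
  have claim : ∀ m : ℕ, 2 + m < N →
      L.T^[2+m] x ∈ Ioc 0 (P.a' 0) ∧ L.α' ^ m * L.T (L.T x) ≤ L.T^[2+m] x := by
    intro m
    induction m with
    | zero =>
      intro _
      constructor
      · rw [show 2+0 = 2 from rfl, e2]; exact ⟨hy2pos, hy2a'0⟩
      · rw [show 2+0 = 2 from rfl, e2, pow_zero, one_mul]
    | succ m ih =>
      intro hlt
      obtain ⟨⟨hu0, hua⟩, hgrow⟩ := ih (by omega)
      have eu : L.T^[2+(m+1)] x = L.T (L.T^[2+m] x) := Function.iterate_succ_apply' L.T (2+m) x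
      have humem : L.T^[2+m] x ∈ Icc 0 L.x₀ := ⟨hu0.le, hua.trans ha'0x0.le⟩
      have hv_pos : 0 < L.T (L.T^[2+m] x) := by
        have h2 : L.T 0 < L.T (L.T^[2+m] x) := L.left_mono ⟨le_rfl, hx0pos.le⟩ humem hu0
        rwa [hT0] at h2
      have hv_lex : L.T (L.T^[2+m] x) ≤ L.x₀ := by
        have h2 : L.T (L.T^[2+m] x) ≤ L.T (P.a' 0) :=
          L.left_mono.monotoneOn humem ⟨ha'0pos.le, ha'0x0.le⟩ hua
        rwa [hTa'0] at h2
      have hv_grow : L.α' * L.T^[2+m] x ≤ L.T (L.T^[2+m] x) :=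
        LM_slope_left L _ hu0 humem.2
      have hvne : L.T (L.T^[2+m] x) ≠ L.x₀ := by
        have := hnc (2+(m+1)) (by omega) hlt; rwa [eu] at this
      have hvnI : L.T (L.T^[2+m] x) ∉ indSet L P := by
        have := hret (2+(m+1)) (by omega) hlt; rwa [eu] at this
      have hva : L.T (L.T^[2+m] x) ≤ P.a' 0 := by
        by_contra hcon
        push_neg at hcon
        exact hvnI ⟨⟨hcon, by linarith⟩, by simpa using hvne⟩
      constructor
      · rw [eu]; exact ⟨hv_pos, hva⟩
      · rw [eu, pow_succ]
        calc L.α' ^ m * L.α' * L.T (L.T x) = L.α' * (L.α' ^ m * L.T (L.T x)) := by ring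
          _ ≤ L.α' * L.T^[2+m] x := mul_le_mul_of_nonneg_left hgrow hα'0.le
          _ ≤ L.T (L.T^[2+m] x) := hv_grow
  obtain ⟨⟨_, hfa⟩, hfg⟩ := claim (N-3) (by omega)
  have hE : L.α' ^ (N-3) * L.T (L.T x) ≤ P.a' 0 := hfg.trans hfa
  have hF : L.α * (1 - L.T x) ≤ L.T (L.T x) := LM_slope_right L (L.T x) hy1.1.le hy1.2
  have hcast : ((N-3 : ℕ) : ℝ) = (N:ℝ) - 3 := by
    rw [Nat.cast_sub hN]; norm_num
  have hEpow : L.α' ^ (N-3) = L.α' ^ ((N:ℝ) - 3) := by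
    rw [← hcast, Real.rpow_natCast]
  have hq0 : (0:ℝ) ≤ (N:ℝ) - 3 := by
    have h3 : (3:ℝ) ≤ (N:ℝ) := by exact_mod_cast hN
    linarith
  have hEpos : (0:ℝ) < L.α' ^ ((N:ℝ) - 3) := Real.rpow_pos_of_pos hα'0 _
  -- Combination machinery
  have hkey2 : ∀ c z Bx : ℝ, 0 < c → 0 ≤ z → c * z ^ Bx ≤ 1 - L.T x →
      P.a' 0/(L.α * c) ≤ M → z ^ Bx ≤ M * L.α' ^ (-((N:ℝ) - 3)) := by
    intro c z Bx hc hz hcusp hMle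
    have h1 : L.α * (c * z ^ Bx) ≤ L.T (L.T x) :=
      le_trans (mul_le_mul_of_nonneg_left hcusp hαpos.le) hF
    have h2 : L.α' ^ ((N:ℝ) - 3) * (L.α * (c * z ^ Bx)) ≤ P.a' 0 := by
      calc L.α' ^ ((N:ℝ) - 3) * (L.α * (c * z ^ Bx))
          ≤ L.α' ^ ((N:ℝ) - 3) * L.T (L.T x) := mul_le_mul_of_nonneg_left h1 hEpos.le
        _ ≤ P.a' 0 := by rw [← hEpow]; exact hE
    have h2' : L.α * (c * z ^ Bx) ≤ P.a' 0 / L.α' ^ ((N:ℝ) - 3) := by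
      rw [le_div_iff₀ hEpos]
      calc L.α * (c * z ^ Bx) * L.α' ^ ((N:ℝ) - 3)
          = L.α' ^ ((N:ℝ) - 3) * (L.α * (c * z ^ Bx)) := by ring
        _ ≤ P.a' 0 := h2
    have h3 : z ^ Bx ≤ P.a' 0 / L.α' ^ ((N:ℝ) - 3) / (L.α * c) := by
      rw [le_div_iff₀ (mul_pos hαpos hc)]
      calc z ^ Bx * (L.α * c) = L.α * (c * z ^ Bx) := by ring
        _ ≤ P.a' 0 / L.α' ^ ((N:ℝ) - 3) := h2'
    have h4 : P.a' 0 / L.α' ^ ((N:ℝ) - 3) / (L.α * c)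
        = (P.a' 0 / (L.α * c)) * (L.α' ^ ((N:ℝ) - 3))⁻¹ := by ring
    have h5 : (P.a' 0 / (L.α * c)) * (L.α' ^ ((N:ℝ) - 3))⁻¹
        ≤ M * (L.α' ^ ((N:ℝ) - 3))⁻¹ :=
      mul_le_mul_of_nonneg_right hMle (inv_nonneg.mpr hEpos.le)
    have h6 : M * (L.α' ^ ((N:ℝ) - 3))⁻¹ = M * L.α' ^ (-((N:ℝ) - 3)) := by
      rw [Real.rpow_neg hα'0.le]
    linarith [h3, h4 ▸ h3]
  have hfinal : ∀ z Bx : ℝ, 0 ≤ z → b ≤ Bx → Bx ≤ L.Bs →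
      z ^ Bx ≤ M * L.α' ^ (-((N:ℝ) - 3)) →
      z ≤ M ^ (1/b) * L.α' ^ ((3:ℝ)/L.Bs) * L.α' ^ (-(N:ℝ) / L.Bs) := by
    intro z Bx hz hbB hBBs' hle
    have h1 := rpow_extract hα'1 hM1 hbpos hbB hBBs' hz hq0 hle
    have heq : L.α' ^ (-((N:ℝ) - 3)/L.Bs) = L.α' ^ ((3:ℝ)/L.Bs) * L.α' ^ (-(N:ℝ)/L.Bs) := by
      rw [← Real.rpow_add hα'0]
      congr 1
      ring
    calc z ≤ M ^ (1/b) * L.α' ^ (-((N:ℝ) - 3)/L.Bs) := h1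
      _ = M ^ (1/b) * L.α' ^ ((3:ℝ)/L.Bs) * L.α' ^ (-(N:ℝ)/L.Bs) := by rw [heq]; ring
  rcases hxne'.lt_or_gt with hlt | hgt
  · -- x < x₀, use the left cusp bound
    have hc := hL x hxIoo.1.le hlt
    have h1 : cL * (L.x₀ - x) ^ L.B' ≤ 1 - L.T x := by linarith
    have hMle : P.a' 0/(L.α * cL) ≤ M :=
      le_trans (le_max_right _ _) (le_max_right _ _)
    have h2 := hkey2 cL (L.x₀ - x) L.B' hcL (by linarith) h1 hMle
    have h3 := hfinal (L.x₀ - x) L.B' (by linarith) (min_le_right _ _) hB'Bs h2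
    rw [abs_of_nonpos (by linarith : x - L.x₀ ≤ 0)]
    linarith
  · -- x₀ < x, use the right cusp bound
    have hc := hR x hgt hxIoo.2.le
    have h1 : cR * (x - L.x₀) ^ L.B ≤ 1 - L.T x := by linarith
    have hMle : P.a' 0/(L.α * cR) ≤ M :=
      le_trans (le_max_left _ _) (le_max_right _ _)
    have h2 := hkey2 cR (x - L.x₀) L.B hcR (by linarith) h1 hMle
    have h3 := hfinal (x - L.x₀) L.B (by linarith) (min_le_left _ _) hBBs h2
    rw [abs_of_nonneg (by linarith : 0 ≤ x - L.x₀)]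
    linarith

/-- The measure estimate for the set of points not returning before time `N`. -/
lemma key_measure : ∃ K > (0:ℝ), ∀ N : ℕ, 3 ≤ N →
    volume {x : ℝ | x ∈ indSet L P ∧ ∀ k : ℕ, 1 ≤ k → k < N → L.T^[k] x ∉ indSet L P}
      ≤ ENNReal.ofReal (K * L.α' ^ (-(N:ℝ) / L.Bs)) := by
  obtain ⟨K₀, hK₀, hKey⟩ := key_pointwise L P
  obtain ⟨⟨hx0a0, ha01⟩, _⟩ := P.ha0
  obtain ⟨⟨ha'0pos, _⟩, _⟩ := P.ha'0
  refine ⟨2*K₀, by positivity, fun N hN => ?_⟩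
  set R := K₀ * L.α' ^ (-(N:ℝ)/L.Bs) with hRdef
  have hsub : {x : ℝ | x ∈ indSet L P ∧ ∀ k : ℕ, 1 ≤ k → k < N → L.T^[k] x ∉ indSet L P}
      ⊆ Icc (L.x₀ - R) (L.x₀ + R) ∪
        ⋃ k ∈ Finset.range N, {x : ℝ | x ∈ Icc (0:ℝ) 1 ∧ L.T^[k] x = L.x₀} := by
    rintro x ⟨hxI, hret⟩
    by_cases hg : ∀ k : ℕ, 2 ≤ k → k < N → L.T^[k] x ≠ L.x₀
    · left
      have h1 := hKey N hN x hxI hret hg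
      have h2 := abs_le.mp h1
      exact ⟨by linarith [h2.1], by linarith [h2.2]⟩
    · right
      push_neg at hg
      obtain ⟨k, hk2, hkN, hkx⟩ := hg
      have hx01 : x ∈ Icc (0:ℝ) 1 := by
        obtain ⟨⟨h1, h2⟩, _⟩ := hxI
        exact ⟨by linarith, by linarith⟩
      exact Set.mem_biUnion (Finset.mem_range.mpr hkN) ⟨hx01, hkx⟩
  have hfin : (⋃ k ∈ Finset.range N,
      {x : ℝ | x ∈ Icc (0:ℝ) 1 ∧ L.T^[k] x = L.x₀}).Finite :=
    Set.Finite.biUnion (Finset.range N).finite_toSet (fun k _ => LM_iter_preim_finite L k)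
  calc volume {x : ℝ | x ∈ indSet L P ∧ ∀ k : ℕ, 1 ≤ k → k < N → L.T^[k] x ∉ indSet L P}
      ≤ volume (Icc (L.x₀ - R) (L.x₀ + R) ∪
          ⋃ k ∈ Finset.range N, {x : ℝ | x ∈ Icc (0:ℝ) 1 ∧ L.T^[k] x = L.x₀}) :=
        measure_mono hsub
    _ ≤ volume (Icc (L.x₀ - R) (L.x₀ + R)) +
        volume (⋃ k ∈ Finset.range N, {x : ℝ | x ∈ Icc (0:ℝ) 1 ∧ L.T^[k] x = L.x₀}) :=
        measure_union_le _ _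
    _ = volume (Icc (L.x₀ - R) (L.x₀ + R)) := by
        rw [hfin.measure_zero, add_zero]
    _ = ENNReal.ofReal (L.x₀ + R - (L.x₀ - R)) := Real.volume_Icc
    _ ≤ ENNReal.ofReal (2*K₀ * L.α' ^ (-(N:ℝ) / L.Bs)) := by
        refine ENNReal.ofReal_le_ofReal (le_of_eq ?_)
        rw [hRdef]; ring

end Aux

/-- Under conditions (i)–(iii) of the expansion lemma, the tail of the
Lebesgue measure of the return-time function on `I` decays exponentially:
`Σ_{k>n} m{x ∈ I : τ_I(x) ≥ k} = O((α')^{-n/B*})` as `n → ∞`. -/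
theorem return_time_tail (L : LorenzMap) (P : PreimageData L) (α'' : ℝ)
    (hexp : ExpCond L P α'') :
    ∃ C > (0:ℝ), ∀ᶠ n : ℕ in atTop,
      (∑' j : ℕ, volume {x | x ∈ indSet L P ∧
          ∀ k : ℕ, 1 ≤ k → k < n + 1 + j → L.T^[k] x ∉ indSet L P})
        ≤ ENNReal.ofReal (C * L.α' ^ (-(n:ℝ) / L.Bs)) := by
  clear hexp
  obtain ⟨K, hK, hKm⟩ := key_measure L P
  have hα'1 := L.hα'
  have hα'0 : (0:ℝ) < L.α' := zero_lt_one.trans hα'1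
  have hBs_pos : 0 < L.Bs := lt_of_lt_of_le L.hB.1 (le_max_left _ _)
  set r := L.α' ^ (-(1:ℝ)/L.Bs) with hrdef
  have hr0 : 0 < r := Real.rpow_pos_of_pos hα'0 _
  have hr1 : r < 1 := by
    refine Real.rpow_lt_one_of_one_lt_of_neg hα'1 ?_
    have : (0:ℝ) < 1/L.Bs := by positivity
    have he : -(1:ℝ)/L.Bs = -(1/L.Bs) := by ring
    rw [he]; linarith
  refine ⟨K * r * (1 - r)⁻¹, mul_pos (mul_pos hK hr0) (inv_pos.mpr (by linarith)), ?_⟩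
  filter_upwards [eventually_ge_atTop 2] with n hn
  have hstep1 : (∑' j : ℕ, volume {x | x ∈ indSet L P ∧
      ∀ k : ℕ, 1 ≤ k → k < n + 1 + j → L.T^[k] x ∉ indSet L P})
      ≤ ∑' j : ℕ, ENNReal.ofReal (K * L.α' ^ (-((n:ℝ)+1)/L.Bs) * r ^ j) := by
    refine ENNReal.tsum_le_tsum fun j => ?_
    have h1 := hKm (n + 1 + j) (by omega)
    refine h1.trans (le_of_eq ?_)
    congr 1
    have he : (-((n + 1 + j : ℕ):ℝ)/L.Bs) = (-((n:ℝ)+1)/L.Bs) + (-(1:ℝ)/L.Bs) * (j:ℝ) := by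
      push_cast; ring
    rw [he, Real.rpow_add hα'0, Real.rpow_mul hα'0.le, Real.rpow_natCast, ← hrdef]
    ring
  have hc₀ : (0:ℝ) ≤ K * L.α' ^ (-((n:ℝ)+1)/L.Bs) := by positivity
  have hstep2 : (∑' j : ℕ, ENNReal.ofReal (K * L.α' ^ (-((n:ℝ)+1)/L.Bs) * r ^ j))
      = ENNReal.ofReal (K * L.α' ^ (-((n:ℝ)+1)/L.Bs)) * (1 - ENNReal.ofReal r)⁻¹ := by
    have hcongr : ∀ j : ℕ, ENNReal.ofReal (K * L.α' ^ (-((n:ℝ)+1)/L.Bs) * r ^ j)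
        = ENNReal.ofReal (K * L.α' ^ (-((n:ℝ)+1)/L.Bs)) * (ENNReal.ofReal r) ^ j := by
      intro j
      rw [ENNReal.ofReal_mul hc₀, ENNReal.ofReal_pow hr0.le]
    rw [tsum_congr hcongr, ENNReal.tsum_mul_left, ENNReal.tsum_geometric]
  have hstep3 : ENNReal.ofReal (K * L.α' ^ (-((n:ℝ)+1)/L.Bs)) * (1 - ENNReal.ofReal r)⁻¹
      = ENNReal.ofReal (K * L.α' ^ (-((n:ℝ)+1)/L.Bs) * (1 - r)⁻¹) := by
    have h1 : (1 : ENNReal) - ENNReal.ofReal r = ENNReal.ofReal (1 - r) := by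
      rw [ENNReal.ofReal_sub _ hr0.le, ENNReal.ofReal_one]
    rw [h1, ← ENNReal.ofReal_inv_of_pos (by linarith : (0:ℝ) < 1 - r),
      ← ENNReal.ofReal_mul hc₀]
  have hstep4 : K * L.α' ^ (-((n:ℝ)+1)/L.Bs) * (1 - r)⁻¹
      = K * r * (1 - r)⁻¹ * L.α' ^ (-(n:ℝ)/L.Bs) := by
    have he : (-((n:ℝ)+1)/L.Bs) = (-(n:ℝ)/L.Bs) + (-(1:ℝ)/L.Bs) := by ring
    rw [he, Real.rpow_add hα'0, ← hrdef]
    ring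
  calc (∑' j : ℕ, volume {x | x ∈ indSet L P ∧
        ∀ k : ℕ, 1 ≤ k → k < n + 1 + j → L.T^[k] x ∉ indSet L P})
      ≤ ∑' j : ℕ, ENNReal.ofReal (K * L.α' ^ (-((n:ℝ)+1)/L.Bs) * r ^ j) := hstep1
    _ = ENNReal.ofReal (K * L.α' ^ (-((n:ℝ)+1)/L.Bs)) * (1 - ENNReal.ofReal r)⁻¹ := hstep2
    _ = ENNReal.ofReal (K * L.α' ^ (-((n:ℝ)+1)/L.Bs) * (1 - r)⁻¹) := hstep3
    _ = ENNReal.ofReal (K * r * (1 - r)⁻¹ * L.α' ^ (-(n:ℝ)/L.Bs)) := by rw [hstep4]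
end
end

section
/- Let σ, ρ, β > 0 and let u : ℝ → ℝ³ solve the shifted Lorenz '63 system u̇₁ = −σu₁ + σu₂, u̇₂ = −u₁u₃ − σu₁ − u₂, u̇₃ = u₁u₂ − βu₃ − β(ρ+σ). Then the second derivative of the Casimir C(t) = ‖u(t)‖² satisfies, writing z := u₃ + (ρ+σ)/2, C̈(t) = 4{σ²u₁² + u₂² − [σ(σ−1) + (β−1)z + (ρ+σ)/2]·u₁u₂ + β²z² + β²·((ρ+σ)/2)·z} evaluated along the solution. -/
/-- For a solution `u` of the shifted Lorenz '63 system, the second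
derivative of the Casimir `C(t) = ‖u(t)‖²` — i.e. the derivative of
`Ċ = −2[E(u) − β(ρ+σ)²/4]` along the solution — equals, writing `z = u₃ + (ρ+σ)/2`,
`C̈ = 4{σ²u₁² + u₂² − [σ(σ−1) + (β−1)z + (ρ+σ)/2] u₁u₂ + β²z² + β²((ρ+σ)/2)z}`. -/
theorem casimir_second_derivative (σ ρ β : ℝ) (hσ : 0 < σ) (hρ : 0 < ρ) (hβ : 0 < β)
    (u₁ u₂ u₃ : ℝ → ℝ)
    (hu₁ : ∀ t, HasDerivAt u₁ (-σ * u₁ t + σ * u₂ t) t)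
    (hu₂ : ∀ t, HasDerivAt u₂ (-(u₁ t) * u₃ t - σ * u₁ t - u₂ t) t)
    (hu₃ : ∀ t, HasDerivAt u₃ (u₁ t * u₂ t - β * u₃ t - β * (ρ + σ)) t) :
    ∀ t, HasDerivAt
      (fun s => -2 * ((σ * u₁ s ^ 2 + u₂ s ^ 2 + β * (u₃ s + (ρ + σ) / 2) ^ 2)
        - β * (ρ + σ) ^ 2 / 4))
      (4 * (σ ^ 2 * u₁ t ^ 2 + u₂ t ^ 2
        - (σ * (σ - 1) + (β - 1) * (u₃ t + (ρ + σ) / 2) + (ρ + σ) / 2)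
            * (u₁ t * u₂ t)
        + β ^ 2 * (u₃ t + (ρ + σ) / 2) ^ 2
        + β ^ 2 * ((ρ + σ) / 2) * (u₃ t + (ρ + σ) / 2))) t := by
  intro t
  have H := (((((hu₁ t).pow 2).const_mul σ).add ((hu₂ t).pow 2)).add
      ((((hu₃ t).add_const ((ρ + σ) / 2)).pow 2).const_mul β)).sub_const
      (β * (ρ + σ) ^ 2 / 4) |>.const_mul (-2)
  refine H.congr_deriv ?_
  ring
end
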